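/- Let E be a finite nonempty set. A function F : 2^E → ℝ satisfies F(X ∩ Y) ≥ min(F(X), F(Y)) for all X, Y ⊆ E if and only if there exists a monotone linkage function π such that F(X) = min{π(x, X) : x ∈ E − X} for every proper subset X ⊊ E. -/

import Mathlib

open Finset

variable {α : Type*}

/-- A set system is accessible: each nonempty feasible set has an element
whose removal keeps it feasible. -/
def Accessible [DecidableEq α] (𝓕 : Finset (Finset α)) : Prop :=
  ∀ X ∈ 𝓕, X.Nonempty → ∃ x ∈ X, X.erase x ∈ 𝓕

/-- Axiom (A2): for X, Y feasible with X ⊄ Y there is x ∈ X − Y with Y ∪ {x} feasible. -/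
def Exchange [DecidableEq α] (𝓕 : Finset (Finset α)) : Prop :=
  ∀ X ∈ 𝓕, ∀ Y ∈ 𝓕, ¬ X ⊆ Y → ∃ x ∈ X \ Y, insert x Y ∈ 𝓕

/-- An antimatroid: a nonempty set system satisfying (A1) and (A2). -/
def IsAntimatroid [DecidableEq α] (𝓕 : Finset (Finset α)) : Prop :=
  𝓕.Nonempty ∧ Accessible 𝓕 ∧ Exchange 𝓕

/-- Feasible continuations Γ(X) = {x ∈ E − X : X ∪ {x} ∈ 𝓕}. -/
def Gamma [Fintype α] [DecidableEq α] (𝓕 : Finset (Finset α)) (X : Finset α) : Finset α :=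
  Finset.univ.filter (fun x => x ∉ X ∧ insert x X ∈ 𝓕)

/-- The k-truncation 𝓕_k = {X ∈ 𝓕 : |X| ≤ k}. -/
def trunc [DecidableEq α] (𝓕 : Finset (Finset α)) (k : ℕ) : Finset (Finset α) :=
  𝓕.filter (fun X => X.card ≤ k)

/-- A k-truncated antimatroid: the k-truncation of some antimatroid. -/
def IsKTruncAntimatroid [DecidableEq α] (𝓕 : Finset (Finset α)) (k : ℕ) : Prop :=
  ∃ 𝓕' : Finset (Finset α), IsAntimatroid 𝓕' ∧ 𝓕 = trunc 𝓕' k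

/-- The rank of a set system: maximal cardinality of a feasible set. -/
def rank (𝓕 : Finset (Finset α)) : ℕ := 𝓕.sup Finset.card

/-- The k-truncated interval property without upper bounds:
for feasible X ⊆ Y with |X| ≤ k−1, |Y| ≤ k−1 and x ∉ Y,
X ∪ {x} feasible implies Y ∪ {x} feasible. -/
def TruncIntervalWUB [DecidableEq α] (𝓕 : Finset (Finset α)) (k : ℕ) : Prop :=
  ∀ X ∈ 𝓕, ∀ Y ∈ 𝓕, X.card < k → Y.card < k → X ⊆ Y →
    ∀ x ∉ Y, insert x X ∈ 𝓕 → insert x Y ∈ 𝓕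

/-- The interval property without upper bounds. -/
def IntervalWUB [DecidableEq α] (𝓕 : Finset (Finset α)) : Prop :=
  ∀ X ∈ 𝓕, ∀ Y ∈ 𝓕, X ⊆ Y → ∀ x ∉ Y, insert x X ∈ 𝓕 → insert x Y ∈ 𝓕

/-- A monotone linkage function: π(x, ·) is antitone with respect to inclusion. -/
def MonoLinkage (π : α → Finset α → ℝ) : Prop :=
  ∀ x : α, ∀ X Y : Finset α, X ⊆ Y → π x Y ≤ π x X

/-- Z is a maximal feasible subset of W. -/
def MaxFeasible [DecidableEq α] (𝓕 : Finset (Finset α)) (W Z : Finset α) : Prop :=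
  Z ∈ 𝓕 ∧ Z ⊆ W ∧ ∀ Z' ∈ 𝓕, Z ⊆ Z' → Z' ⊆ W → Z' = Z

open Classical in
/-- The linkage function π_F constructed from a set function F:
π_F(x,X) = max{F(A) : A ∈ [X, E−x]_{𝓕_{k−1}}} if x ∉ X and this interval is nonempty,
and π_F(x,X) = min{F(A) : A ∈ 𝓕_{k−1}} otherwise. -/
noncomputable def piF [DecidableEq α] (𝓕 : Finset (Finset α)) (k : ℕ)
    (F : Finset α → ℝ) (x : α) (X : Finset α) : ℝ :=
  if x ∉ X ∧ ∃ A ∈ 𝓕, A.card < k ∧ X ⊆ A ∧ x ∉ A then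
    sSup (F '' {A : Finset α | A ∈ 𝓕 ∧ A.card < k ∧ X ⊆ A ∧ x ∉ A})
  else
    sInf (F '' {A : Finset α | A ∈ 𝓕 ∧ A.card < k})

/-- (Boolean case.) A function F : 2^E → ℝ on a finite nonempty E
satisfies F(X ∩ Y) ≥ min(F(X), F(Y)) for all X, Y ⊆ E iff there is a monotone
linkage function π with F(X) = min{π(x,X) : x ∈ E − X} for every proper X ⊊ E. -/
lemma inf'_aux [Fintype α] [DecidableEq α] (F : Finset α → ℝ)
    (hQ : ∀ X Y : Finset α, min (F X) (F Y) ≤ F (X ∩ Y)) (X : Finset α) :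
    ∀ (s : Finset (Finset α)) (hs : s.Nonempty),
      (∀ A ∈ s, X ⊆ A ∧ F X < F A) →
      X ⊆ s.inf' hs id ∧ F X < F (s.inf' hs id) := by
  intro s hs
  induction hs using Finset.Nonempty.cons_induction with
  | singleton A =>
      intro h
      simpa using h A (by simp)
  | cons A s hA hs ih =>
      intro h
      have h1 := h A (Finset.mem_cons_self A s)
      have h2 := ih (fun B hB => h B (Finset.mem_cons_of_mem hB))
      rw [Finset.inf'_cons hs]
      constructor
      · exact Finset.subset_inter h1.1 h2.1
      · calc F X < min (F A) (F (s.inf' hs id)) := lt_min h1.2 h2.2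
          _ ≤ F (A ∩ s.inf' hs id) := hQ _ _
          _ = F (A ⊓ s.inf' hs id) := rfl

theorem statement_16 [Fintype α] [DecidableEq α] [Nonempty α]
    (F : Finset α → ℝ) :
    (∀ X Y : Finset α, min (F X) (F Y) ≤ F (X ∩ Y)) ↔
    (∃ π : α → Finset α → ℝ, MonoLinkage π ∧
      ∀ X : Finset α, X ≠ Finset.univ →
        F X = sInf ((fun x => π x X) '' {x : α | x ∉ X})) := by
  classical
  constructor
  · intro hQ
    set π : α → Finset α → ℝ := fun x X =>
      if x ∈ X then sInf (F '' Set.univ)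
      else sSup (F '' {A : Finset α | X ⊆ A ∧ x ∉ A}) with hπ
    have hfin : ∀ s : Set (Finset α), (F '' s).Finite := fun s => (Set.toFinite s).image F
    have key : ∀ (x : α) (X : Finset α), x ∉ X → F X ≤ π x X := by
      intro x X hx
      simp only [hπ, if_neg hx]
      exact le_csSup ((hfin _).bddAbove) ⟨X, ⟨subset_refl X, hx⟩, rfl⟩
    refine ⟨π, ?_, ?_⟩
    · intro x X Y hXY
      by_cases hxX : x ∈ X
      · simp [hπ, hxX, hXY hxX]
      · by_cases hxY : x ∈ Y
        · simp only [hπ, if_pos hxY, if_neg hxX]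
          calc sInf (F '' Set.univ) ≤ F X := csInf_le ((hfin _).bddBelow) ⟨X, trivial, rfl⟩
            _ ≤ sSup (F '' {A : Finset α | X ⊆ A ∧ x ∉ A}) :=
              le_csSup ((hfin _).bddAbove) ⟨X, ⟨subset_refl X, hxX⟩, rfl⟩
        · simp only [hπ, if_neg hxX, if_neg hxY]
          refine csSup_le_csSup ((hfin _).bddAbove) ?_
            (Set.image_mono (fun A hA => ⟨hXY.trans hA.1, hA.2⟩))
          exact ⟨F Y, Y, ⟨subset_refl Y, hxY⟩, rfl⟩
    · intro X hX
      obtain ⟨z, hz⟩ : ∃ z, z ∉ X := by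
        by_contra h; push_neg at h; exact hX (Finset.eq_univ_iff_forall.2 h)
      have himgne : ((fun x => π x X) '' {x | x ∉ X}).Nonempty := ⟨π z X, z, hz, rfl⟩
      have himgfin : ((fun x => π x X) '' {x | x ∉ X}).Finite :=
        (Set.toFinite _).image _
      apply le_antisymm
      · exact le_csInf himgne (by rintro b ⟨x, hx, rfl⟩; exact key x X hx)
      · suffices h : ∃ y, y ∉ X ∧ π y X ≤ F X by
          obtain ⟨y, hy, hle⟩ := h
          exact (csInf_le himgfin.bddBelow ⟨y, hy, rfl⟩).trans hle
        set 𝒯 : Finset (Finset α) :=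
          Finset.univ.filter (fun A => X ⊆ A ∧ F X < F A) with h𝒯
        by_cases hT : 𝒯.Nonempty
        · obtain ⟨hsub, hlt⟩ := inf'_aux F hQ X 𝒯 hT
            (fun A hA => by simpa [h𝒯] using (Finset.mem_filter.1 hA).2)
          set B := 𝒯.inf' hT id with hB
          have hne : X ≠ B := fun e => absurd hlt (by rw [← e]; exact lt_irrefl _)
          obtain ⟨y, hyB, hyX⟩ := Finset.exists_of_ssubset (lt_of_le_of_ne hsub hne)
          refine ⟨y, hyX, ?_⟩
          simp only [hπ, if_neg hyX]
          refine csSup_le ⟨F X, X, ⟨subset_refl X, hyX⟩, rfl⟩ ?_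
          rintro b ⟨A, ⟨hXA, hyA⟩, rfl⟩
          by_contra hgt
          push_neg at hgt
          have hAT : A ∈ 𝒯 := by simp [h𝒯, hXA, hgt]
          exact hyA (Finset.inf'_le id hAT hyB)
        · refine ⟨z, hz, ?_⟩
          simp only [hπ, if_neg hz]
          refine csSup_le ⟨F X, X, ⟨subset_refl X, hz⟩, rfl⟩ ?_
          rintro b ⟨A, ⟨hXA, hzA⟩, rfl⟩
          by_contra hgt
          push_neg at hgt
          exact hT ⟨A, by simp [h𝒯, hXA, hgt]⟩
  · rintro ⟨π, hmono, hF⟩ X Y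
    by_cases h : X ∩ Y = Finset.univ
    · have hXu : X = Finset.univ :=
        Finset.univ_subset_iff.1 (h ▸ Finset.inter_subset_left)
      have hYu : Y = Finset.univ :=
        Finset.univ_subset_iff.1 (h ▸ Finset.inter_subset_right)
      simp [hXu, hYu]
    · rw [hF _ h]
      obtain ⟨z, hz⟩ : ∃ z, z ∉ X ∩ Y := by
        by_contra hc; push_neg at hc; exact h (Finset.eq_univ_iff_forall.2 hc)
      refine le_csInf ⟨π z (X ∩ Y), z, hz, rfl⟩ ?_
      rintro b ⟨x, hx, rfl⟩
      simp only [Set.mem_setOf_eq, Finset.mem_inter, not_and_or] at hx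
      rcases hx with hx | hx
      · have hXu : X ≠ Finset.univ := fun e => hx (e ▸ Finset.mem_univ x)
        calc min (F X) (F Y) ≤ F X := min_le_left _ _
          _ ≤ π x X := csInf_le ((Set.toFinite {x : α | x ∉ X}).image (fun x => π x X)).bddBelow ⟨x, hx, rfl⟩ |>.trans_eq' (hF X hXu).symm
          _ ≤ π x (X ∩ Y) := hmono x (X ∩ Y) X Finset.inter_subset_left
      · have hYu : Y ≠ Finset.univ := fun e => hx (e ▸ Finset.mem_univ x)
        calc min (F X) (F Y) ≤ F Y := min_le_right _ _
          _ ≤ π x Y := csInf_le ((Set.toFinite {x : α | x ∉ Y}).image (fun x => π x Y)).bddBelow ⟨x, hx, rfl⟩ |>.trans_eq' (hF Y hYu).symm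
          _ ≤ π x (X ∩ Y) := hmono x (X ∩ Y) Y Finset.inter_subset_right
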